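/- The trinomial polynomial g = T_0^{l_0} + T_1^{l_1} + T_2^{l_2} is irreducible in the polynomial ring K[T_{ij}], where K is an algebraically closed field of characteristic zero. -/

import Mathlib

open MvPolynomial

/-- Index set of the variables `T_{ij}`, `i = 0,1,2`, `j = 1,…,n_i`. -/
abbrev TrinIdx (n : Fin 3 → ℕ) : Type := Σ i : Fin 3, Fin (n i)

/-- The trinomial `g = T₀^{l₀} + T₁^{l₁} + T₂^{l₂}` where
`T_i^{l_i} = ∏_j T_{ij}^{l_{ij}}`. -/
noncomputable def trinomial (K : Type*) [Field K] (n : Fin 3 → ℕ)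
    (l : ∀ i : Fin 3, Fin (n i) → ℕ) : MvPolynomial (TrinIdx n) K :=
  ∑ i : Fin 3, ∏ j : Fin (n i), X (⟨i, j⟩ : TrinIdx n) ^ l i j

section Aux

variable {K : Type*} [Field K]

private lemma prime_X_mv {σ : Type*} (v : σ) : Prime (X v : MvPolynomial σ K) := by
  classical
  let e : MvPolynomial σ K ≃ₐ[K] Polynomial (MvPolynomial {b : σ // b ≠ v} K) :=
    (renameEquiv K (Equiv.optionSubtypeNe v).symm).trans (optionEquivLeft K _)
  rw [← MulEquiv.prime_iff e.toMulEquiv]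
  have h : e (X v) = Polynomial.X := by
    simp only [e, AlgEquiv.trans_apply, renameEquiv_apply, rename_X,
      Equiv.optionSubtypeNe_symm_self, optionEquivLeft_X_none]
  rw [show e.toMulEquiv (X v) = e (X v) from rfl, h]
  exact Polynomial.prime_X

private lemma assoc_var_of_dvd_prod {σ ι : Type*} {q : MvPolynomial σ K} (hq : Prime q)
    {s : Finset ι} {f : ι → σ} {e : ι → ℕ}
    (h : q ∣ ∏ j ∈ s, X (f j) ^ e j) :
    ∃ j ∈ s, Associated q (X (f j) : MvPolynomial σ K) := by
  obtain ⟨j, hj, hd⟩ := hq.exists_mem_finset_dvd h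
  exact ⟨j, hj, hq.associated_of_dvd (prime_X_mv _) (hq.dvd_of_dvd_pow hd)⟩

private lemma prod_monomial_one {σ ι : Type*} (s : Finset ι) (f : ι → (σ →₀ ℕ)) :
    (∏ j ∈ s, monomial (f j) (1 : K)) = monomial (∑ j ∈ s, f j) 1 := by
  classical
  induction s using Finset.induction_on with
  | empty => simp
  | insert _ _ h ih =>
      rw [Finset.prod_insert h, ih, Finset.sum_insert h, monomial_mul, one_mul]

end Aux

section Trin

variable (K : Type*) [Field K] (n : Fin 3 → ℕ) (l : ∀ i : Fin 3, Fin (n i) → ℕ)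

/-- The variables other than `T_{0,j0}`. -/
private abbrev Rst (j0 : Fin (n 0)) : Type _ := {v : TrinIdx n // v ≠ ⟨0, j0⟩}

/-- The monomial `T₀^{l₀} / T_{0,j0}^{l_{0,j0}}`. -/
private noncomputable def uu (j0 : Fin (n 0)) : MvPolynomial (Rst n j0) K :=
  ∏ j ∈ (Finset.univ.erase j0).attach,
    X (⟨⟨0, j.1⟩, fun h =>
      (Finset.mem_erase.mp j.2).1 (eq_of_heq (Sigma.mk.inj_iff.mp h).2)⟩ : Rst n j0) ^ l 0 j.1

/-- The monomial `T_i^{l_i}` for `i ≠ 0`, viewed in the smaller ring. -/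
private noncomputable def bb (j0 : Fin (n 0)) (i : Fin 3) (hi : i ≠ 0) :
    MvPolynomial (Rst n j0) K :=
  ∏ j : Fin (n i),
    X (⟨⟨i, j⟩, fun h => hi (congrArg Sigma.fst h)⟩ : Rst n j0) ^ l i j

/-- The isomorphism separating out the variable `T_{0,j0}`. -/
private noncomputable def Phi (j0 : Fin (n 0)) :
    MvPolynomial (TrinIdx n) K ≃ₐ[K] Polynomial (MvPolynomial (Rst n j0) K) :=
  (renameEquiv K (Equiv.optionSubtypeNe (⟨0, j0⟩ : TrinIdx n)).symm).trans
    (optionEquivLeft K _)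

private lemma Phi_trinomial (j0 : Fin (n 0)) :
    Phi K n j0 (trinomial K n l) =
      Polynomial.C (uu K n l j0) * Polynomial.X ^ l 0 j0 +
        Polynomial.C (bb K n l j0 1 (by decide) + bb K n l j0 2 (by decide)) := by
  classical
  have hX0 : Phi K n j0 (X (⟨0, j0⟩ : TrinIdx n)) = Polynomial.X := by
    simp only [Phi, AlgEquiv.trans_apply, renameEquiv_apply, rename_X,
      Equiv.optionSubtypeNe_symm_self, optionEquivLeft_X_none]
  have hXne : ∀ (v : TrinIdx n) (hv : v ≠ ⟨0, j0⟩),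
      Phi K n j0 (X v) = Polynomial.C (X (⟨v, hv⟩ : Rst n j0)) := by
    intro v hv
    simp only [Phi, AlgEquiv.trans_apply, renameEquiv_apply, rename_X,
      Equiv.optionSubtypeNe_symm_of_ne hv, optionEquivLeft_X_some]
  have h0 : Phi K n j0 (∏ j : Fin (n 0), X (⟨0, j⟩ : TrinIdx n) ^ l 0 j) =
      Polynomial.C (uu K n l j0) * Polynomial.X ^ l 0 j0 := by
    rw [← Finset.mul_prod_erase Finset.univ _ (Finset.mem_univ j0), map_mul, map_pow, hX0,
      ← Finset.prod_attach (Finset.univ.erase j0)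
        (fun j => X (⟨0, j⟩ : TrinIdx n) ^ l 0 j), map_prod]
    rw [Finset.prod_congr rfl (fun j _ => by
      rw [map_pow, hXne ⟨0, j.1⟩ (fun h =>
        (Finset.mem_erase.mp j.2).1 (eq_of_heq (Sigma.mk.inj_iff.mp h).2)), ← Polynomial.C_pow])]
    rw [← map_prod]
    rw [mul_comm]
    rfl
  have hbc : ∀ (i : Fin 3) (hi : i ≠ 0),
      Phi K n j0 (∏ j : Fin (n i), X (⟨i, j⟩ : TrinIdx n) ^ l i j) =
        Polynomial.C (bb K n l j0 i hi) := by
    intro i hi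
    rw [map_prod]
    rw [Finset.prod_congr rfl (fun j _ => by
      rw [map_pow, hXne ⟨i, j⟩ (fun h => hi (congrArg Sigma.fst h)), ← Polynomial.C_pow])]
    rw [← map_prod]
    rfl
  rw [trinomial, map_sum, Fin.sum_univ_three, h0, hbc 1 (by decide), hbc 2 (by decide),
    map_add]
  ring

private lemma uu_def (j0 : Fin (n 0)) : uu K n l j0 =
    ∏ j ∈ (Finset.univ.erase j0).attach,
      X (⟨⟨0, j.1⟩, fun h =>
        (Finset.mem_erase.mp j.2).1 (eq_of_heq (Sigma.mk.inj_iff.mp h).2)⟩ : Rst n j0) ^ l 0 j.1 :=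
  rfl

private lemma uu_ne_zero (j0 : Fin (n 0)) : uu K n l j0 ≠ 0 := by
  rw [uu_def]
  exact Finset.prod_ne_zero_iff.mpr fun j _ => pow_ne_zero _ (X_ne_zero _)

private lemma eval_bb (j0 : Fin (n 0)) (π : Rst n j0 → K) (i : Fin 3) (hi : i ≠ 0) :
    eval π (bb K n l j0 i hi) =
      ∏ j : Fin (n i), (π ⟨⟨i, j⟩, fun h => hi (congrArg Sigma.fst h)⟩) ^ l i j := by
  rw [bb, map_prod]
  exact Finset.prod_congr rfl fun j _ => by rw [map_pow, eval_X]

private lemma no_X_dvd [CharZero K] (hl : ∀ i j, 0 < l i j) (j0 : Fin (n 0))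
    (h1 : (1 : Fin 3) ≠ 0) (h2 : (2 : Fin 3) ≠ 0) (w : Rst n j0) :
    ¬ (X w ∣ bb K n l j0 1 h1 + bb K n l j0 2 h2) := by
  classical
  intro hdvd
  set π : Rst n j0 → K := fun w' => if w' = w then 0 else 1 with hπ
  have h0 : eval π (bb K n l j0 1 h1 + bb K n l j0 2 h2) = 0 := by
    obtain ⟨d, hd⟩ := hdvd
    rw [hd, map_mul, eval_X]
    simp [hπ]
  have claimA : ∀ (i : Fin 3) (hi : i ≠ 0), w.1.1 ≠ i → eval π (bb K n l j0 i hi) = 1 := by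
    intro i hi hne
    rw [eval_bb]
    apply Finset.prod_eq_one
    intro j _
    have hne' : (⟨⟨i, j⟩, fun h => hi (congrArg Sigma.fst h)⟩ : Rst n j0) ≠ w := by
      intro h
      exact hne (congrArg (fun x : Rst n j0 => x.1.1) h).symm
    simp only [hπ, if_neg hne', one_pow]
  have claimB : ∀ (i : Fin 3) (hi : i ≠ 0),
      eval π (bb K n l j0 i hi) = 0 ∨ eval π (bb K n l j0 i hi) = 1 := by
    intro i hi
    rw [eval_bb]
    refine Finset.prod_induction _ (fun x => x = 0 ∨ x = 1) ?_ (Or.inr rfl) ?_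
    · rintro a b (ha | ha) (hb | hb) <;> simp [ha, hb]
    · intro j _
      by_cases hj : (⟨⟨i, j⟩, fun h => hi (congrArg Sigma.fst h)⟩ : Rst n j0) = w
      · left; simp only [hπ, if_pos hj]; exact zero_pow (hl i j).ne'
      · right; simp only [hπ, if_neg hj, one_pow]
  rw [map_add] at h0
  by_cases hw : w.1.1 = 1
  · have e2 := claimA 2 h2 (by rw [hw]; decide)
    rcases claimB 1 h1 with e1 | e1 <;> rw [e1, e2] at h0 <;> norm_num at h0
  · have e1 := claimA 1 h1 hw
    rcases claimB 2 h2 with e2 | e2 <;> rw [e1, e2] at h0 <;> norm_num at h0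

private lemma cpoly_ne_zero [CharZero K] (j0 : Fin (n 0))
    (h1 : (1 : Fin 3) ≠ 0) (h2 : (2 : Fin 3) ≠ 0) :
    bb K n l j0 1 h1 + bb K n l j0 2 h2 ≠ 0 := by
  intro h
  have := congrArg (eval (fun _ : Rst n j0 => (1 : K))) h
  rw [map_add, eval_bb, eval_bb, map_zero] at this
  simp only [one_pow, Finset.prod_const_one] at this
  norm_num at this

private lemma cpoly_not_unit [IsAlgClosed K] (hn2 : 0 < n 2) (hl : ∀ i j, 0 < l i j)
    (j0 : Fin (n 0)) (h1 : (1 : Fin 3) ≠ 0) (h2 : (2 : Fin 3) ≠ 0) :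
    ¬ IsUnit (bb K n l j0 1 h1 + bb K n l j0 2 h2) := by
  classical
  intro hu
  set j2 : Fin (n 2) := ⟨0, hn2⟩ with hj2
  set v2 : Rst n j0 := ⟨⟨2, j2⟩, fun h => h2 (congrArg Sigma.fst h)⟩ with hv2
  obtain ⟨b, hb⟩ := IsAlgClosed.exists_pow_nat_eq (-1 : K) (hl 2 j2)
  set π : Rst n j0 → K := fun w => if w = v2 then b else 1 with hπ
  have e1 : eval π (bb K n l j0 1 h1) = 1 := by
    rw [eval_bb]
    apply Finset.prod_eq_one
    intro j _
    have hne : (⟨⟨1, j⟩, fun h => h1 (congrArg Sigma.fst h)⟩ : Rst n j0) ≠ v2 := by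
      intro h
      have := congrArg (fun x : Rst n j0 => x.1.1) h
      simp only [hv2] at this
      exact absurd this (by decide)
    rw [hπ]; simp only [if_neg hne, one_pow]
  have e2 : eval π (bb K n l j0 2 h2) = -1 := by
    rw [eval_bb, ← Finset.mul_prod_erase Finset.univ _ (Finset.mem_univ j2)]
    have hrest : ∀ j ∈ Finset.univ.erase j2,
        (π ⟨⟨2, j⟩, fun h => h2 (congrArg Sigma.fst h)⟩) ^ l 2 j = 1 := by
      intro j hj
      have hne : (⟨⟨2, j⟩, fun h => h2 (congrArg Sigma.fst h)⟩ : Rst n j0) ≠ v2 := by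
        intro h
        have := eq_of_heq (Sigma.mk.inj_iff.mp (Subtype.ext_iff.mp h)).2
        exact (Finset.mem_erase.mp hj).1 this
      simp only [hπ, if_neg hne, one_pow]
    rw [Finset.prod_congr rfl hrest, Finset.prod_const_one, mul_one]
    simp only [hπ, if_pos rfl]
    exact hb
  have := hu.map (eval π)
  rw [map_add, e1, e2] at this
  norm_num at this

private lemma bb_eq_monomial (j0 : Fin (n 0)) (i : Fin 3) (hi : i ≠ 0) :
    bb K n l j0 i hi =
      monomial (∑ j : Fin (n i),
        Finsupp.single (⟨⟨i, j⟩, fun h => hi (congrArg Sigma.fst h)⟩ : Rst n j0) (l i j)) 1 := by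
  rw [bb, ← prod_monomial_one]
  exact Finset.prod_congr rfl fun j _ => X_pow_eq_monomial

private lemma not_sq_dvd [CharZero K] (hn2 : 0 < n 2) (hl : ∀ i j, 0 < l i j)
    (j0 : Fin (n 0)) (h1 : (1 : Fin 3) ≠ 0) (h2 : (2 : Fin 3) ≠ 0)
    {q : MvPolynomial (Rst n j0) K} (hq : Prime q)
    (hqc : q ∣ bb K n l j0 1 h1 + bb K n l j0 2 h2) :
    ¬ (q * q ∣ bb K n l j0 1 h1 + bb K n l j0 2 h2) := by
  classical
  intro hsq
  obtain ⟨d, hd⟩ := hsq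
  set j2 : Fin (n 2) := ⟨0, hn2⟩ with hj2
  set v2 : Rst n j0 := ⟨⟨2, j2⟩, fun h => h2 (congrArg Sigma.fst h)⟩ with hv2
  -- q divides the partial derivative at v2
  have hder : q ∣ pderiv v2 (bb K n l j0 1 h1 + bb K n l j0 2 h2) := by
    rw [hd, mul_assoc, pderiv_mul]
    exact dvd_add ((dvd_mul_right q d).mul_left _) (dvd_mul_right q _)
  -- compute the partial derivative
  set s1 : Rst n j0 →₀ ℕ := ∑ j : Fin (n 1),
    Finsupp.single (⟨⟨1, j⟩, fun h => h1 (congrArg Sigma.fst h)⟩ : Rst n j0) (l 1 j) with hs1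
  set s2 : Rst n j0 →₀ ℕ := ∑ j : Fin (n 2),
    Finsupp.single (⟨⟨2, j⟩, fun h => h2 (congrArg Sigma.fst h)⟩ : Rst n j0) (l 2 j) with hs2
  have hs1v : s1 v2 = 0 := by
    rw [hs1, Finsupp.finset_sum_apply]
    apply Finset.sum_eq_zero
    intro j _
    apply Finsupp.single_eq_of_ne'
    intro h
    have := congrArg (fun x : Rst n j0 => x.1.1) h
    simp only [hv2] at this
    exact absurd this (by decide)
  have hs2v : s2 v2 = l 2 j2 := by
    rw [hs2, Finsupp.finset_sum_apply]
    rw [Finset.sum_eq_single j2]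
    · rw [Finsupp.single_eq_same]
    · intro j _ hj
      apply Finsupp.single_eq_of_ne'
      intro h
      exact hj (eq_of_heq (Sigma.mk.inj_iff.mp (Subtype.ext_iff.mp h)).2)
    · intro h
      exact absurd (Finset.mem_univ j2) h
  rw [map_add, bb_eq_monomial, bb_eq_monomial, ← hs1, ← hs2, pderiv_monomial, pderiv_monomial,
    hs1v, hs2v] at hder
  simp only [Nat.cast_zero, mul_zero, monomial_zero, zero_add, one_mul] at hder
  -- so q divides a monomial with nonzero coefficient
  have hk : ((l 2 j2 : K)) ≠ 0 := Nat.cast_ne_zero.mpr (hl 2 j2).ne'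
  rw [monomial_eq] at hder
  have hder' : q ∣ (s2 - Finsupp.single v2 1).prod fun v e => X v ^ e := by
    have heq : C ((l 2 j2 : K)⁻¹) *
        (C ((l 2 j2 : K)) * (s2 - Finsupp.single v2 1).prod fun v e => X v ^ e) =
        (s2 - Finsupp.single v2 1).prod fun v e => X v ^ e := by
      rw [← mul_assoc, ← C_mul, inv_mul_cancel₀ hk, C_1, one_mul]
    rw [← heq]
    exact hder.mul_left _
  rw [Finsupp.prod] at hder'
  obtain ⟨v, hv, hass⟩ := assoc_var_of_dvd_prod hq hder'
  exact no_X_dvd K n l hl j0 h1 h2 v (hass.symm.dvd.trans hqc)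

end Trin

/-- The trinomial `g = T₀^{l₀} + T₁^{l₁} + T₂^{l₂}` is irreducible in the polynomial ring
`K[T_{ij}]` over an algebraically closed field `K` of characteristic zero. -/
theorem trinomial_irreducible (K : Type*) [Field K] [IsAlgClosed K] [CharZero K]
    (n : Fin 3 → ℕ) (l : ∀ i : Fin 3, Fin (n i) → ℕ)
    (hn : ∀ i, 0 < n i) (hl : ∀ i j, 0 < l i j) :
    Irreducible (trinomial K n l) := by
  classical
  set j0 : Fin (n 0) := ⟨0, hn 0⟩ with hj0
  set u : MvPolynomial (Rst n j0) K := uu K n l j0 with hu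
  set c : MvPolynomial (Rst n j0) K :=
    bb K n l j0 1 (by decide) + bb K n l j0 2 (by decide) with hc
  have hc0 : c ≠ 0 := cpoly_ne_zero K n l j0 _ _
  have hcu : ¬ IsUnit c := cpoly_not_unit K n l (hn 2) hl j0 _ _
  have hnoX : ∀ v : Rst n j0, ¬ (X v ∣ c) := no_X_dvd K n l hl j0 _ _
  obtain ⟨q, hqirr, hqc⟩ := WfDvdMonoid.exists_irreducible_factor hcu hc0
  have hq : Prime q := UniqueFactorizationMonoid.irreducible_iff_prime.mp hqirr
  have hu0 : u ≠ 0 := uu_ne_zero K n l j0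
  -- no prime divisor of `u` divides `c`
  have hvar : ∀ {q' : MvPolynomial (Rst n j0) K}, Prime q' → q' ∣ u → ¬ q' ∣ c := by
    intro q' hq' hq'u hq'c
    rw [hu, uu_def] at hq'u
    obtain ⟨v, hv, hass⟩ := assoc_var_of_dvd_prod hq' hq'u
    exact hnoX _ (hass.symm.dvd.trans hq'c)
  have hqu : ¬ q ∣ u := fun h => hvar hq h hqc
  have hq2 : ¬ q * q ∣ c := not_sq_dvd K n l (hn 2) hl j0 _ _ hq hqc
  set m : ℕ := l 0 j0 with hm
  have hm0 : m ≠ 0 := (hl 0 j0).ne'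
  set P : Polynomial (MvPolynomial (Rst n j0) K) :=
    Polynomial.C u * Polynomial.X ^ m + Polynomial.C c with hP
  have hdeg : P.natDegree = m := by
    rw [hP, Polynomial.natDegree_add_C, Polynomial.natDegree_C_mul_X_pow _ _ hu0]
  have hcoeff : ∀ i, P.coeff i =
      (if m = i then u else 0) + (if i = 0 then c else 0) := by
    intro i
    rw [hP, Polynomial.coeff_add, Polynomial.coeff_C_mul, Polynomial.coeff_X_pow,
      Polynomial.coeff_C]
    by_cases h : i = m <;> simp [h, eq_comm]
  have hcoeff0 : P.coeff 0 = c := by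
    rw [hcoeff 0, if_neg (by omega), if_pos rfl, zero_add]
  have hEis : P.IsEisensteinAt (Ideal.span {q}) := by
    constructor
    · rw [Polynomial.leadingCoeff, hdeg, hcoeff m, if_pos rfl, if_neg hm0, add_zero,
        Ideal.mem_span_singleton]
      exact hqu
    · intro i hi
      rw [hdeg] at hi
      rw [hcoeff i, if_neg (by omega)]
      by_cases h : i = 0
      · rw [if_pos h, zero_add, Ideal.mem_span_singleton]
        exact hqc
      · rw [if_neg h, add_zero]
        exact Ideal.zero_mem _
    · rw [hcoeff0, Ideal.span_singleton_pow, Ideal.mem_span_singleton, pow_two]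
      exact hq2
  have hPrim : P.IsPrimitive := by
    intro r hr
    rw [Polynomial.C_dvd_iff_dvd_coeff] at hr
    have hru : r ∣ u := by
      have := hr m
      rwa [hcoeff m, if_pos rfl, if_neg hm0, add_zero] at this
    have hrc : r ∣ c := by
      have := hr 0
      rwa [hcoeff0] at this
    by_contra hrnu
    have hr0 : r ≠ 0 := by
      rintro rfl
      exact hu0 (zero_dvd_iff.mp hru)
    obtain ⟨q', hq'irr, hq'r⟩ := WfDvdMonoid.exists_irreducible_factor hrnu hr0
    exact hvar (UniqueFactorizationMonoid.irreducible_iff_prime.mp hq'irr)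
      (hq'r.trans hru) (hq'r.trans hrc)
  have hPirr : Irreducible P :=
    hEis.irreducible ((Ideal.span_singleton_prime hq.ne_zero).mpr hq) hPrim
      (by rw [hdeg]; exact hl 0 j0)
  have hmap : Irreducible (Phi K n j0 (trinomial K n l)) := by
    rw [Phi_trinomial K n l j0]
    exact hPirr
  exact (MulEquiv.irreducible_iff (Phi K n j0)).mp hmap
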